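/- Let b>0, σ>0, and C > max(b, 1). For x > 0 define the scale function V(x) = ∫₁ˣ exp( −∫₁ʸ 2(b − min(z,C)) / (σ² · min(z,C)) dz ) dy, and set C₁ = ∫₁ᶜ exp(2(y−1)/σ²) · y^{−2b/σ²} dy. Then for every x > C, V(x) = C₁ + C^{1 − 2b/σ²} · (σ²/(2(C−b))) · exp(2(C−1)/σ²) · ( exp( 2(C−b)(x−C)/(σ²C) ) − 1 ), and consequently lim_{x → +∞} V(x) = +∞. -/

import Mathlib

open MeasureTheory Filter Set intervalIntegral

lemma aux_congr_integrable {f g : ℝ → ℝ} {a b : ℝ}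
    (h : Set.EqOn f g (Set.uIcc a b)) (hf : IntervalIntegrable f volume a b) :
    IntervalIntegrable g volume a b :=
  hf.congr fun _ hx =>
    h (Set.uIoc_subset_uIcc hx)

lemma inner_le (b σ C : ℝ) (hσ : 0 < σ) {y : ℝ} (hy1 : 1 ≤ y) (hyC : y ≤ C) :
    (∫ z in (1:ℝ)..y, 2 * (b - min z C) / (σ ^ 2 * min z C))
      = 2 * b / σ ^ 2 * Real.log y - 2 * (y - 1) / σ ^ 2 := by
  have hs : (0:ℝ) < σ ^ 2 := by positivity
  have hcongr : ∀ z ∈ Set.uIcc (1:ℝ) y,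
      2 * (b - min z C) / (σ ^ 2 * min z C) = 2 * (b - z) / (σ ^ 2 * z) := by
    intro z hz
    rw [Set.uIcc_of_le hy1] at hz
    rw [min_eq_left (hz.2.trans hyC)]
  rw [intervalIntegral.integral_congr hcongr]
  have hderiv : ∀ z ∈ Set.uIcc (1:ℝ) y,
      HasDerivAt (fun t => 2 * b / σ ^ 2 * Real.log t - 2 * (t - 1) / σ ^ 2)
        (2 * (b - z) / (σ ^ 2 * z)) z := by
    intro z hz
    rw [Set.uIcc_of_le hy1] at hz
    have hz0 : (0:ℝ) < z := lt_of_lt_of_le one_pos hz.1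
    have h1 := ((Real.hasDerivAt_log hz0.ne').const_mul (2 * b / σ ^ 2)).sub
      ((((hasDerivAt_id z).sub_const 1).const_mul 2).div_const (σ ^ 2))
    refine h1.congr_deriv ?_
    field_simp
  have hcont : IntervalIntegrable (fun z => 2 * (b - z) / (σ ^ 2 * z)) volume 1 y := by
    apply ContinuousOn.intervalIntegrable
    apply ContinuousOn.div (by fun_prop) (by fun_prop)
    intro z hz
    rw [Set.uIcc_of_le hy1] at hz
    have hz0 : (0:ℝ) < z := lt_of_lt_of_le one_pos hz.1
    positivity
  rw [intervalIntegral.integral_eq_sub_of_hasDerivAt hderiv hcont]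
  simp [Real.log_one]

lemma inner_ge (b σ C : ℝ) (hσ : 0 < σ) (hC1 : 1 < C) {y : ℝ} (hyC : C ≤ y) :
    (∫ z in (1:ℝ)..y, 2 * (b - min z C) / (σ ^ 2 * min z C))
      = (2 * b / σ ^ 2 * Real.log C - 2 * (C - 1) / σ ^ 2)
        + 2 * (b - C) / (σ ^ 2 * C) * (y - C) := by
  have hs : (0:ℝ) < σ ^ 2 := by positivity
  have hC0 : (0:ℝ) < C := lt_trans one_pos hC1
  have hEq1 : Set.EqOn (fun z => 2 * (b - z) / (σ ^ 2 * z))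
      (fun z => 2 * (b - min z C) / (σ ^ 2 * min z C)) (Set.uIcc (1:ℝ) C) := by
    intro z hz
    rw [Set.uIcc_of_le hC1.le] at hz
    simp only [min_eq_left hz.2]
  have hInt1 : IntervalIntegrable
      (fun z => 2 * (b - min z C) / (σ ^ 2 * min z C)) volume 1 C := by
    apply aux_congr_integrable hEq1
    apply ContinuousOn.intervalIntegrable
    apply ContinuousOn.div (by fun_prop) (by fun_prop)
    intro z hz
    rw [Set.uIcc_of_le hC1.le] at hz
    have hz0 : (0:ℝ) < z := lt_of_lt_of_le one_pos hz.1
    positivity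
  have hEq2 : Set.EqOn (fun _ : ℝ => 2 * (b - C) / (σ ^ 2 * C))
      (fun z => 2 * (b - min z C) / (σ ^ 2 * min z C)) (Set.uIcc C y) := by
    intro z hz
    rw [Set.uIcc_of_le hyC] at hz
    simp only [min_eq_right hz.1]
  have hInt2 : IntervalIntegrable
      (fun z => 2 * (b - min z C) / (σ ^ 2 * min z C)) volume C y :=
    aux_congr_integrable hEq2 intervalIntegrable_const
  rw [← intervalIntegral.integral_add_adjacent_intervals hInt1 hInt2]
  rw [inner_le b σ C hσ hC1.le le_rfl,
    intervalIntegral.integral_congr hEq2.symm, intervalIntegral.integral_const,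
    smul_eq_mul]
  ring

/-- Explicit form of the scale function
`V(x) = ∫₁ˣ exp(−∫₁ʸ 2(b − min(z,C))/(σ² min(z,C)) dz) dy` of the truncated CIR diffusion
for `x > C` (with `C > max(b,1)` and `C₁ = ∫₁ᶜ exp(2(y−1)/σ²) y^{−2b/σ²} dy`), and its
divergence `V(x) → +∞` as `x → +∞`. -/
theorem truncated_cir_scale_function_formula (b σ C : ℝ)
    (hb : 0 < b) (hσ : 0 < σ) (hC : max b 1 < C) :
    (∀ x : ℝ, C < x →
      (∫ y in (1 : ℝ)..x,
          Real.exp (-(∫ z in (1 : ℝ)..y, 2 * (b - min z C) / (σ ^ 2 * min z C))))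
        = (∫ y in (1 : ℝ)..C, Real.exp (2 * (y - 1) / σ ^ 2) * y ^ (-(2 * b / σ ^ 2)))
          + C ^ (1 - 2 * b / σ ^ 2) * (σ ^ 2 / (2 * (C - b))) * Real.exp (2 * (C - 1) / σ ^ 2)
            * (Real.exp (2 * (C - b) * (x - C) / (σ ^ 2 * C)) - 1)) ∧
    Tendsto (fun x : ℝ =>
        ∫ y in (1 : ℝ)..x,
          Real.exp (-(∫ z in (1 : ℝ)..y, 2 * (b - min z C) / (σ ^ 2 * min z C))))
      atTop atTop := by
  have hC1 : (1:ℝ) < C := lt_of_le_of_lt (le_max_right b 1) hC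
  have hbC : b < C := lt_of_le_of_lt (le_max_left b 1) hC
  have hC0 : (0:ℝ) < C := lt_trans one_pos hC1
  have hs : (0:ℝ) < σ ^ 2 := by positivity
  set k : ℝ := 2 * (C - b) / (σ ^ 2 * C) with hk_def
  have hk0 : 0 < k := by
    have : 0 < C - b := sub_pos.2 hbC
    positivity
  set f : ℝ → ℝ := fun y =>
    Real.exp (-(∫ z in (1 : ℝ)..y, 2 * (b - min z C) / (σ ^ 2 * min z C))) with hf_def
  -- EqOn on [1,C]
  have hEqLow : Set.EqOn f
      (fun y => Real.exp (2 * (y - 1) / σ ^ 2) * y ^ (-(2 * b / σ ^ 2)))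
      (Set.uIcc (1:ℝ) C) := by
    intro y hy
    rw [Set.uIcc_of_le hC1.le] at hy
    have hy0 : (0:ℝ) < y := lt_of_lt_of_le one_pos hy.1
    simp only [hf_def, inner_le b σ C hσ hy.1 hy.2, Real.rpow_def_of_pos hy0,
      ← Real.exp_add]
    congr 1
    ring
  -- EqOn on [C,x]
  set D : ℝ := Real.exp (2 * (C - 1) / σ ^ 2) * C ^ (-(2 * b / σ ^ 2)) with hD_def
  have hD0 : 0 < D := by positivity
  have hEqHigh : ∀ x : ℝ, C ≤ x → Set.EqOn f
      (fun y => D * Real.exp (k * (y - C))) (Set.uIcc C x) := by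
    intro x hx y hy
    rw [Set.uIcc_of_le hx] at hy
    simp only [hf_def, inner_ge b σ C hσ hC1 hy.1, hD_def,
      Real.rpow_def_of_pos hC0, ← Real.exp_add]
    congr 1
    ring
  -- integrability pieces
  have hIntLow : IntervalIntegrable f volume 1 C := by
    apply aux_congr_integrable hEqLow.symm
    apply ContinuousOn.intervalIntegrable
    apply ContinuousOn.mul (by fun_prop)
    apply ContinuousOn.rpow_const continuousOn_id
    intro y hy
    rw [Set.uIcc_of_le hC1.le] at hy
    exact Or.inl (ne_of_gt (lt_of_lt_of_le one_pos hy.1))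
  have hIntHigh : ∀ x : ℝ, C ≤ x → IntervalIntegrable f volume C x := by
    intro x hx
    exact aux_congr_integrable ((hEqHigh x hx).symm)
      ((Continuous.intervalIntegrable (by fun_prop) _ _))
  -- the main formula
  have hmain : ∀ x : ℝ, C < x →
      (∫ y in (1:ℝ)..x, f y)
        = (∫ y in (1 : ℝ)..C, Real.exp (2 * (y - 1) / σ ^ 2) * y ^ (-(2 * b / σ ^ 2)))
          + C ^ (1 - 2 * b / σ ^ 2) * (σ ^ 2 / (2 * (C - b))) * Real.exp (2 * (C - 1) / σ ^ 2)
            * (Real.exp (2 * (C - b) * (x - C) / (σ ^ 2 * C)) - 1) := by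
    intro x hx
    rw [← intervalIntegral.integral_add_adjacent_intervals hIntLow (hIntHigh x hx.le)]
    congr 1
    · exact intervalIntegral.integral_congr hEqLow
    · rw [intervalIntegral.integral_congr (hEqHigh x hx.le),
        intervalIntegral.integral_const_mul]
      have hderiv : ∀ y ∈ Set.uIcc C x,
          HasDerivAt (fun t => Real.exp (k * (t - C)) / k) (Real.exp (k * (y - C))) y := by
        intro y _
        have h1 : HasDerivAt (fun t : ℝ => k * (t - C)) k y := by
          simpa using ((hasDerivAt_id y).sub_const C).const_mul k
        have h2 := (h1.exp).div_const k
        simpa [mul_comm, mul_div_assoc, mul_div_cancel_left₀ _ hk0.ne'] using h2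
      rw [intervalIntegral.integral_eq_sub_of_hasDerivAt hderiv
        (Continuous.intervalIntegrable (by fun_prop) _ _)]
      have hexp : (2 * (C - b) * (x - C) / (σ ^ 2 * C)) = k * (x - C) := by
        rw [hk_def]; ring
      have hrpow : C ^ (1 - 2 * b / σ ^ 2) = C * C ^ (-(2 * b / σ ^ 2)) := by
        rw [show (1 - 2 * b / σ ^ 2) = 1 + -(2 * b / σ ^ 2) by ring,
          Real.rpow_add hC0, Real.rpow_one]
      rw [hexp, hrpow, hD_def]
      have hCb : C - b ≠ 0 := sub_ne_zero.2 hbC.ne'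
      field_simp [hk_def]
      simp only [sub_self, mul_zero, Real.exp_zero]
      rw [hk_def]
      field_simp
  refine ⟨hmain, ?_⟩
  -- divergence
  have hK0 : 0 < C ^ (1 - 2 * b / σ ^ 2) * (σ ^ 2 / (2 * (C - b)))
      * Real.exp (2 * (C - 1) / σ ^ 2) := by
    have : 0 < C - b := sub_pos.2 hbC
    positivity
  have htend : Tendsto (fun x : ℝ =>
      (∫ y in (1 : ℝ)..C, Real.exp (2 * (y - 1) / σ ^ 2) * y ^ (-(2 * b / σ ^ 2)))
        + C ^ (1 - 2 * b / σ ^ 2) * (σ ^ 2 / (2 * (C - b))) * Real.exp (2 * (C - 1) / σ ^ 2)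
          * (Real.exp (2 * (C - b) * (x - C) / (σ ^ 2 * C)) - 1)) atTop atTop := by
    apply tendsto_atTop_add_const_left
    apply Tendsto.const_mul_atTop hK0
    apply tendsto_atTop_add_const_right
    apply Real.tendsto_exp_atTop.comp
    have : Tendsto (fun x : ℝ => x - C) atTop atTop :=
      tendsto_atTop_add_const_right _ (-C) tendsto_id
    have h2 : Tendsto (fun x : ℝ => 2 * (C - b) * (x - C)) atTop atTop :=
      (this.const_mul_atTop (by linarith : (0:ℝ) < 2 * (C - b)))
    exact h2.atTop_div_const (by positivity)
  refine htend.congr' ?_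
  filter_upwards [eventually_gt_atTop C] with x hx
  exact (hmain x hx).symm
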